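/- Let T > 0, p ≥ 1, and let g : ℝ → ℝ be Borel measurable. Then ∫_0^T ( ∫_ℝ |g(x)| dN(0,t)(x) ) dt ≤ T^{(p−1)/p} · (2T/π)^{1/(2p)} · ( ∫_ℝ |g(x)|^p dx )^{1/p}, where N(0,t) is the Gaussian measure on ℝ with mean 0 and variance t (the Dirac mass at 0 for t = 0), and the right-hand side is interpreted as +∞ if g ∉ L^p(ℝ). [This is Krylov's estimate E[∫_0^T |g(B_t)| d⟨B⟩_t] ≤ (E[⟨B⟩_T])^{(p−1)/p} (E[|B_T|])^{1/p} ‖g‖_{L^p} specialized to classical standard Brownian motion, for which ⟨B⟩_T = T and E[|B_T|] = √(2T/π).] -/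

import Mathlib

open MeasureTheory ProbabilityTheory
open scoped ENNReal

/-- Hölder with the constant function `1`: `∫ f ≤ μ(univ)^(1-1/p) (∫ f^p)^(1/p)` for `p ≥ 1`. -/
lemma krylov_aux_lintegral_le {α : Type*} [MeasurableSpace α] (μ : Measure α) (f : α → ℝ≥0∞)
    (hf : AEMeasurable f μ) {p : ℝ} (hp : 1 ≤ p) :
    ∫⁻ a, f a ∂μ ≤ (μ Set.univ) ^ (1 - 1/p) * (∫⁻ a, f a ^ p ∂μ) ^ (1/p) := by
  rcases hp.eq_or_lt with rfl | hp1
  · simp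
  · have hpq := Real.HolderConjugate.conjExponent hp1
    have h := ENNReal.lintegral_mul_le_Lp_mul_Lq μ hpq hf aemeasurable_const (g := fun _ => 1)
    simp only [mul_one, Pi.mul_apply, ENNReal.one_rpow, lintegral_one] at h
    calc ∫⁻ a, f a ∂μ ≤ (∫⁻ a, f a ^ p ∂μ) ^ (1/p) * (μ Set.univ) ^ (1/p.conjExponent) := h
    _ = (μ Set.univ) ^ (1 - 1/p) * (∫⁻ a, f a ^ p ∂μ) ^ (1/p) := by
        rw [mul_comm]
        congr 1
        have : 1 / p.conjExponent = 1 - 1/p := by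
          have := hpq.inv_add_inv_eq_one
          rw [one_div, one_div]; linarith
        rw [this]

theorem krylov_estimate_gaussian (T p : ℝ) (hT : 0 < T) (hp : 1 ≤ p)
    (g : ℝ → ℝ) (hg : Measurable g) :
    ∫⁻ t in Set.Icc (0 : ℝ) T,
        ∫⁻ x, ENNReal.ofReal |g x| ∂(gaussianReal 0 t.toNNReal) ≤
      ENNReal.ofReal (T ^ ((p - 1) / p)) *
        ENNReal.ofReal ((2 * T / Real.pi) ^ (1 / (2 * p))) *
          (∫⁻ x, ENNReal.ofReal (|g x| ^ p)) ^ (1 / p) := by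
  have hp0 : (0:ℝ) < p := lt_of_lt_of_le one_pos hp
  set L : ℝ≥0∞ := ∫⁻ x, ENNReal.ofReal (|g x| ^ p) with hL
  set c : ℝ → ℝ≥0∞ := fun t => ENNReal.ofReal ((Real.sqrt (2 * Real.pi * t))⁻¹) with hc
  -- measurable version of the inner integral on (0, T]
  set G : ℝ → ℝ≥0∞ := fun t => ∫⁻ x,
      ENNReal.ofReal ((Real.sqrt (2 * Real.pi * t))⁻¹ * Real.exp (-(x - 0)^2 / (2 * t))) *
        ENNReal.ofReal |g x| with hG
  have hGmeas : Measurable G := by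
    apply Measurable.lintegral_prod_right' (f := fun q : ℝ × ℝ =>
      ENNReal.ofReal ((Real.sqrt (2 * Real.pi * q.1))⁻¹ * Real.exp (-(q.2 - 0)^2 / (2 * q.1))) *
        ENNReal.ofReal |g q.2|)
    apply Measurable.mul (f := fun q : ℝ × ℝ =>
      ENNReal.ofReal ((Real.sqrt (2 * Real.pi * q.1))⁻¹ * Real.exp (-(q.2 - 0)^2 / (2 * q.1))))
      (g := fun q : ℝ × ℝ => ENNReal.ofReal |g q.2|)
    · apply Measurable.ennreal_ofReal
      apply Measurable.mul
      · exact ((measurable_const.mul measurable_fst).sqrt).inv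
      · exact (((measurable_snd.sub measurable_const).pow measurable_const).neg.div
          (measurable_const.mul measurable_fst)).exp
    · exact ((hg.comp measurable_snd).abs).ennreal_ofReal
  have hvne : ∀ t : ℝ, t ∈ Set.Ioc (0:ℝ) T → t.toNNReal ≠ 0 := by
    intro t ht
    simp only [ne_eq, Real.toNNReal_eq_zero, not_le]
    exact ht.1
  -- On (0,T], the inner integral equals G
  have hFG : ∀ t ∈ Set.Ioc (0:ℝ) T,
      (∫⁻ x, ENNReal.ofReal |g x| ∂(gaussianReal 0 t.toNNReal)) = G t := by
    intro t ht
    rw [gaussianReal_of_var_ne_zero _ (hvne t ht),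
      lintegral_withDensity_eq_lintegral_mul _ (measurable_gaussianPDF _ _)
        (hg.abs.ennreal_ofReal)]
    simp only [hG, Pi.mul_apply, gaussianPDF, gaussianPDFReal, Real.coe_toNNReal t ht.1.le]
  -- Jensen per t : inner integral ≤ (∫ |g|^p dν)^(1/p)
  have hJensen : ∀ t : ℝ,
      (∫⁻ x, ENNReal.ofReal |g x| ∂(gaussianReal 0 t.toNNReal)) ≤
        (∫⁻ x, ENNReal.ofReal (|g x| ^ p) ∂(gaussianReal 0 t.toNNReal)) ^ (1/p) := by
    intro t
    have h := krylov_aux_lintegral_le (gaussianReal 0 t.toNNReal)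
      (fun x => ENNReal.ofReal |g x|) (hg.abs.ennreal_ofReal.aemeasurable) hp
    simp only [measure_univ, ENNReal.one_rpow, one_mul] at h
    refine h.trans (le_of_eq ?_)
    congr 1
    refine lintegral_congr fun x => ?_
    rw [ENNReal.ofReal_rpow_of_nonneg (abs_nonneg _) hp0.le]
  -- bound on ∫ |g|^p dν for t ∈ (0,T]
  have hIpt : ∀ t ∈ Set.Ioc (0:ℝ) T,
      (∫⁻ x, ENNReal.ofReal (|g x| ^ p) ∂(gaussianReal 0 t.toNNReal)) ≤ c t * L := by
    intro t ht
    have hgp : Measurable fun x => ENNReal.ofReal (|g x| ^ p) := by fun_prop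
    rw [gaussianReal_of_var_ne_zero _ (hvne t ht),
      lintegral_withDensity_eq_lintegral_mul _ (measurable_gaussianPDF _ _) hgp]
    have hbd : ∀ x : ℝ, (gaussianPDF 0 t.toNNReal * fun x => ENNReal.ofReal (|g x| ^ p)) x ≤
        c t * ENNReal.ofReal (|g x| ^ p) := by
      intro x
      simp only [Pi.mul_apply]
      refine mul_le_mul_left ?_ _
      rw [gaussianPDF, hc]
      refine ENNReal.ofReal_le_ofReal ?_
      rw [gaussianPDFReal, Real.coe_toNNReal t ht.1.le]
      calc (Real.sqrt (2 * Real.pi * t))⁻¹ * Real.exp (-(x - 0)^2 / (2 * t))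
          ≤ (Real.sqrt (2 * Real.pi * t))⁻¹ * 1 := by
            refine mul_le_mul_of_nonneg_left ?_ (by positivity)
            rw [Real.exp_le_one_iff]
            apply div_nonpos_of_nonpos_of_nonneg
            · simp [neg_nonpos, sq_nonneg]
            · linarith [ht.1]
      _ = (Real.sqrt (2 * Real.pi * t))⁻¹ := mul_one _
    refine (lintegral_mono hbd).trans (le_of_eq ?_)
    exact lintegral_const_mul _ hgp
  -- pointwise bound G t ^ p ≤ c t * L on (0,T]
  have hGp : ∀ t ∈ Set.Ioc (0:ℝ) T, G t ^ p ≤ c t * L := by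
    intro t ht
    have h1 : G t ≤ (c t * L) ^ (1/p) := by
      rw [← hFG t ht]
      exact (hJensen t).trans (ENNReal.rpow_le_rpow (hIpt t ht) (by positivity))
    calc G t ^ p ≤ ((c t * L) ^ (1/p)) ^ p := ENNReal.rpow_le_rpow h1 hp0.le
    _ = c t * L := by
        rw [← ENNReal.rpow_mul, one_div, inv_mul_cancel₀ hp0.ne', ENNReal.rpow_one]
  -- the time integral of c
  have hcint : ∫⁻ t in Set.Ioc (0:ℝ) T, c t ≤ ENNReal.ofReal (Real.sqrt (2 * T / Real.pi)) := by
    have hψ : ∀ t ∈ Set.Ioc (0:ℝ) T,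
        c t = ENNReal.ofReal ((Real.sqrt (2 * Real.pi))⁻¹ * t ^ (-(1/2) : ℝ)) := by
      intro t ht
      simp only [hc]
      congr 1
      rw [Real.sqrt_mul (by positivity) t, mul_inv, Real.rpow_neg ht.1.le,
        ← Real.sqrt_eq_rpow]
    have hInt : IntegrableOn (fun t : ℝ => (Real.sqrt (2 * Real.pi))⁻¹ * t ^ (-(1/2) : ℝ))
        (Set.Ioc (0:ℝ) T) := by
      refine Integrable.const_mul ?_ _
      exact (intervalIntegral.intervalIntegrable_rpow' (by norm_num : (-1:ℝ) < -(1/2))).1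
    calc ∫⁻ t in Set.Ioc (0:ℝ) T, c t
        = ∫⁻ t in Set.Ioc (0:ℝ) T,
            ENNReal.ofReal ((Real.sqrt (2 * Real.pi))⁻¹ * t ^ (-(1/2) : ℝ)) :=
          setLIntegral_congr_fun measurableSet_Ioc hψ
      _ = ENNReal.ofReal (∫ t in Set.Ioc (0:ℝ) T,
            (Real.sqrt (2 * Real.pi))⁻¹ * t ^ (-(1/2) : ℝ)) := by
          rw [← ofReal_integral_eq_lintegral_ofReal hInt]
          exact (ae_restrict_iff' measurableSet_Ioc).2
            (Filter.Eventually.of_forall fun t ht => mul_nonneg (by positivity) (Real.rpow_nonneg ht.1.le _))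
      _ ≤ ENNReal.ofReal (Real.sqrt (2 * T / Real.pi)) := by
          refine ENNReal.ofReal_le_ofReal ?_
          rw [MeasureTheory.integral_const_mul]
          have hval : ∫ t in Set.Ioc (0:ℝ) T, t ^ (-(1/2) : ℝ) = 2 * Real.sqrt T := by
            rw [← intervalIntegral.integral_of_le hT.le,
              integral_rpow (Or.inl (by norm_num : (-1:ℝ) < -(1/2)))]
            rw [Real.zero_rpow (by norm_num : (-(1/2) : ℝ) + 1 ≠ 0)]
            rw [show (-(1/2) : ℝ) + 1 = 1/2 by norm_num, ← Real.sqrt_eq_rpow]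
            ring
          rw [hval]
          have h2 : Real.sqrt 2 * Real.sqrt 2 = 2 := Real.mul_self_sqrt (by norm_num)
          have hs2 : (0:ℝ) < Real.sqrt 2 := Real.sqrt_pos.mpr (by norm_num)
          have hsp : (0:ℝ) < Real.sqrt Real.pi := Real.sqrt_pos.mpr Real.pi_pos
          have hsplit : Real.sqrt (2 * T / Real.pi) =
              Real.sqrt 2 * Real.sqrt T / Real.sqrt Real.pi := by
            rw [Real.sqrt_div (by positivity : (0:ℝ) ≤ 2 * T),
              Real.sqrt_mul (by norm_num : (0:ℝ) ≤ 2)]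
          rw [hsplit, Real.sqrt_mul (by norm_num : (0:ℝ) ≤ 2) Real.pi]
          rw [mul_inv, inv_mul_eq_div, div_mul_eq_mul_div, div_le_div_iff₀ (by positivity)
            (by positivity)]
          have hcancel : (Real.sqrt Real.pi)⁻¹ * (2 * Real.sqrt T) * Real.sqrt Real.pi
              = 2 * Real.sqrt T := by field_simp
          rw [hcancel]
          nlinarith [h2, Real.sqrt_nonneg T]
  -- main chain
  have hIoc : (volume.restrict (Set.Ioc (0:ℝ) T)) Set.univ = ENNReal.ofReal T := by
    rw [Measure.restrict_apply_univ, Real.volume_Ioc, sub_zero]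
  calc ∫⁻ t in Set.Icc (0 : ℝ) T, ∫⁻ x, ENNReal.ofReal |g x| ∂(gaussianReal 0 t.toNNReal)
      = ∫⁻ t in Set.Ioc (0 : ℝ) T, ∫⁻ x, ENNReal.ofReal |g x| ∂(gaussianReal 0 t.toNNReal) := by
        rw [← Measure.restrict_congr_set Ioc_ae_eq_Icc]
    _ = ∫⁻ t in Set.Ioc (0 : ℝ) T, G t := setLIntegral_congr_fun measurableSet_Ioc
        hFG
    _ ≤ (ENNReal.ofReal T) ^ (1 - 1/p) * (∫⁻ t in Set.Ioc (0:ℝ) T, G t ^ p) ^ (1/p) := by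
        have := krylov_aux_lintegral_le (volume.restrict (Set.Ioc (0:ℝ) T)) G
          hGmeas.aemeasurable hp
        rwa [hIoc] at this
    _ ≤ (ENNReal.ofReal T) ^ (1 - 1/p) * (∫⁻ t in Set.Ioc (0:ℝ) T, c t * L) ^ (1/p) := by
        refine mul_le_mul_right (ENNReal.rpow_le_rpow ?_ (by positivity)) _
        exact setLIntegral_mono ((measurable_const.mul measurable_id').sqrt.inv.ennreal_ofReal.mul
          measurable_const) hGp
    _ ≤ (ENNReal.ofReal T) ^ (1 - 1/p) *
        (ENNReal.ofReal (Real.sqrt (2 * T / Real.pi)) * L) ^ (1/p) := by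
        refine mul_le_mul_right (ENNReal.rpow_le_rpow ?_ (by positivity)) _
        rw [lintegral_mul_const (f := c) _ ((measurable_const.mul measurable_id').sqrt.inv.ennreal_ofReal)]
        exact mul_le_mul_left hcint _
    _ = ENNReal.ofReal (T ^ ((p - 1) / p)) *
        ENNReal.ofReal ((2 * T / Real.pi) ^ (1 / (2 * p))) * L ^ (1 / p) := by
        rw [ENNReal.mul_rpow_of_nonneg _ _ (by positivity : (0:ℝ) ≤ 1/p), ← mul_assoc]
        congr 1
        · congr 1
          · rw [← ENNReal.ofReal_rpow_of_pos hT]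
            congr 1
            field_simp
          · rw [ENNReal.ofReal_rpow_of_pos (Real.sqrt_pos.mpr (by positivity))]
            congr 1
            rw [Real.sqrt_eq_rpow, ← Real.rpow_mul (by positivity)]
            congr 1
            field_simp
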